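/- The Mills ratio m of the standard normal distribution is strictly reciprocally concave on (0,∞): m is strictly convex on (0,∞) and x ↦ m(1/x) is strictly concave on (0,∞) (equivalently, x ↦ x² m′(x) is strictly decreasing on (0,∞)). -/

import Mathlib

open MeasureTheory Filter Set intervalIntegral

/-- The standard normal probability density function. -/
noncomputable def stdNormalPDF (t : ℝ) : ℝ := Real.exp (-t ^ 2 / 2) / Real.sqrt (2 * Real.pi)

/-- The Mills ratio of the standard normal distribution: survival function over density. -/
noncomputable def millsRatio (x : ℝ) : ℝ := (∫ t in Set.Ioi x, stdNormalPDF t) / stdNormalPDF x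

noncomputable def stdNormalSurv (x : ℝ) : ℝ := ∫ t in Set.Ioi x, stdNormalPDF t

lemma pdf_pos (x : ℝ) : 0 < stdNormalPDF x := by
  unfold stdNormalPDF
  positivity

lemma pdf_continuous : Continuous stdNormalPDF := by
  unfold stdNormalPDF
  fun_prop

lemma pdf_hasDerivAt (x : ℝ) : HasDerivAt stdNormalPDF (-x * stdNormalPDF x) x := by
  have h1 : HasDerivAt (fun t : ℝ => -t ^ 2 / 2) (-x) x := by
    have := ((hasDerivAt_pow 2 x).neg).div_const 2
    convert this using 1 <;> try rfl
    ring
  have h2 := (h1.exp).div_const (Real.sqrt (2 * Real.pi))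
  convert h2 using 1 <;> try rfl
  unfold stdNormalPDF; ring

lemma pdf_integrable : Integrable stdNormalPDF := by
  have h : Integrable (fun t : ℝ => Real.exp (-(1/2) * t ^ 2)) :=
    integrable_exp_neg_mul_sq (by norm_num)
  have := h.div_const (Real.sqrt (2 * Real.pi))
  convert this using 2 with t
  unfold stdNormalPDF
  ring_nf

lemma surv_eq (x : ℝ) :
    stdNormalSurv x = stdNormalSurv 0 - ∫ t in (0:ℝ)..x, stdNormalPDF t := by
  rcases le_or_gt 0 x with hx | hx
  · rw [intervalIntegral.integral_of_le hx, eq_sub_iff_add_eq]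
    unfold stdNormalSurv
    rw [add_comm, ← MeasureTheory.setIntegral_union (Set.Ioc_disjoint_Ioi le_rfl)
        measurableSet_Ioi pdf_integrable.integrableOn pdf_integrable.integrableOn,
      Set.Ioc_union_Ioi_eq_Ioi hx]
  · rw [intervalIntegral.integral_of_ge hx.le, sub_neg_eq_add]
    unfold stdNormalSurv
    rw [add_comm, ← MeasureTheory.setIntegral_union (Set.Ioc_disjoint_Ioi le_rfl)
        measurableSet_Ioi pdf_integrable.integrableOn pdf_integrable.integrableOn,
      Set.Ioc_union_Ioi_eq_Ioi hx.le]

lemma surv_hasDerivAt (x : ℝ) : HasDerivAt stdNormalSurv (-stdNormalPDF x) x := by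
  have h : HasDerivAt (fun u => ∫ t in (0:ℝ)..u, stdNormalPDF t) (stdNormalPDF x) x :=
    intervalIntegral.integral_hasDerivAt_right pdf_integrable.intervalIntegrable
      (pdf_continuous.stronglyMeasurableAtFilter _ _) pdf_continuous.continuousAt
  have h2 := (hasDerivAt_const x (stdNormalSurv 0)).sub h
  have : stdNormalSurv = fun u => stdNormalSurv 0 - ∫ t in (0:ℝ)..u, stdNormalPDF t :=
    funext surv_eq
  rw [this]
  exact h2.congr_deriv (by simp)

lemma surv_tendsto : Tendsto stdNormalSurv atTop (nhds 0) := by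
  have h : Tendsto (fun u => ∫ t in (0:ℝ)..u, stdNormalPDF t) atTop
      (nhds (stdNormalSurv 0)) :=
    intervalIntegral_tendsto_integral_Ioi 0 pdf_integrable.integrableOn tendsto_id
  have h2 := (tendsto_const_nhds (x := stdNormalSurv 0) (f := atTop)).sub h
  rw [sub_self] at h2
  have : stdNormalSurv = fun u => stdNormalSurv 0 - ∫ t in (0:ℝ)..u, stdNormalPDF t :=
    funext surv_eq
  rw [this]
  exact h2

lemma pdf_tendsto : Tendsto stdNormalPDF atTop (nhds 0) := by
  unfold stdNormalPDF
  have h1 : Tendsto (fun x : ℝ => -x ^ 2 / 2) atTop atBot := by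
    apply Filter.Tendsto.atBot_div_const (by norm_num)
    exact tendsto_neg_atBot_iff.mpr (tendsto_pow_atTop (by norm_num))
  have := (Real.tendsto_exp_atBot.comp h1).div_const (Real.sqrt (2 * Real.pi))
  simpa using this

lemma mills_eq (x : ℝ) : millsRatio x = stdNormalSurv x / stdNormalPDF x := rfl

lemma mills_hasDerivAt (x : ℝ) :
    HasDerivAt millsRatio (x * millsRatio x - 1) x := by
  have h := (surv_hasDerivAt x).div (pdf_hasDerivAt x) (pdf_pos x).ne'
  have he : millsRatio = fun y => stdNormalSurv y / stdNormalPDF y := funext mills_eq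
  rw [he]
  convert h using 1 <;> try rfl
  simp only []
  have hp := (pdf_pos x).ne'
  field_simp
  ring

lemma deriv_mills : deriv millsRatio = fun x => x * millsRatio x - 1 :=
  funext fun x => (mills_hasDerivAt x).deriv

lemma mills_continuous : Continuous millsRatio :=
  continuous_iff_continuousAt.mpr fun x => (mills_hasDerivAt x).continuousAt

lemma pos_of_deriv_neg_tendsto {f f' : ℝ → ℝ} {x : ℝ}
    (hd : ∀ y ∈ Set.Ici x, HasDerivAt f (f' y) y)
    (hneg : ∀ y ∈ Set.Ici x, f' y < 0)
    (hlim : Tendsto f atTop (nhds 0)) : 0 < f x := by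
  have hanti : StrictAntiOn f (Set.Ici x) := by
    apply strictAntiOn_of_deriv_neg (convex_Ici x)
      (fun y hy => (hd y hy).continuousAt.continuousWithinAt)
    intro y hy
    rw [interior_Ici] at hy
    rw [(hd y (le_of_lt (mem_Ioi.mp hy))).deriv]
    exact hneg y (le_of_lt (mem_Ioi.mp hy))
  have h1 : (0:ℝ) ≤ f (x + 1) := by
    refine le_of_tendsto hlim ?_
    filter_upwards [eventually_ge_atTop (x + 1)] with y hy
    rcases eq_or_lt_of_le hy with h | h
    · exact le_of_eq (by rw [h])
    · exact (hanti (mem_Ici.mpr (by linarith))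
        (mem_Ici.mpr (by linarith)) h).le
  have h2 : f (x + 1) < f x :=
    hanti self_mem_Ici (mem_Ici.mpr (by linarith)) (by linarith)
  linarith

lemma sq_add_one_pos (y : ℝ) : (0:ℝ) < y ^ 2 + 1 := by positivity

/-- Lower bound: `x/(x²+1) < m(x)` for `x > 0` (in fact all `x`). -/
lemma mills_lower {x : ℝ} (hx : 0 < x) : x / (x ^ 2 + 1) < millsRatio x := by
  set h : ℝ → ℝ := fun y => stdNormalSurv y - y * stdNormalPDF y / (y ^ 2 + 1) with hh
  have key : 0 < h x := by
    apply pos_of_deriv_neg_tendsto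
      (f' := fun y => -2 * stdNormalPDF y / (y ^ 2 + 1) ^ 2)
    · intro y _
      have d1 : HasDerivAt (fun y : ℝ => y * stdNormalPDF y)
          (1 * stdNormalPDF y + y * (-y * stdNormalPDF y)) y :=
        (hasDerivAt_id y).mul (pdf_hasDerivAt y)
      have d2 : HasDerivAt (fun y : ℝ => y ^ 2 + 1) (2 * y ^ 1) y :=
        (hasDerivAt_pow 2 y).add_const 1
      have d3 := d1.div d2 (sq_add_one_pos y).ne'
      have d4 := (surv_hasDerivAt y).sub d3
      convert d4 using 1 <;> try rfl
      have h1 := (sq_add_one_pos y).ne'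
      field_simp
      ring
    · intro y _
      have := pdf_pos y
      have := sq_add_one_pos y
      have : (0:ℝ) < (y ^ 2 + 1) ^ 2 := by positivity
      have h2 : -2 * stdNormalPDF y < 0 := by linarith [pdf_pos y]
      exact div_neg_of_neg_of_pos h2 this
    · have h1 : Tendsto (fun y : ℝ => y * stdNormalPDF y / (y ^ 2 + 1)) atTop (nhds 0) := by
        apply tendsto_of_tendsto_of_tendsto_of_le_of_le' tendsto_const_nhds pdf_tendsto
        · filter_upwards [eventually_ge_atTop (0:ℝ)] with y hy
          have := (pdf_pos y).le
          positivity
        · filter_upwards [eventually_ge_atTop (0:ℝ)] with y hy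
          rw [div_le_iff₀ (sq_add_one_pos y)]
          nlinarith [pdf_pos y, sq_nonneg (y - 1)]
      simpa using surv_tendsto.sub h1
  rw [mills_eq, hh] at *
  rw [div_lt_div_iff₀ (sq_add_one_pos x) (pdf_pos x)]
  have := (pdf_pos x)
  simp only [sub_pos] at key
  rw [div_lt_iff₀ (sq_add_one_pos x)] at key
  linarith [key]

/-- Upper bound: `(x³+3x) m(x) < x²+2` for `x > 0`. -/
lemma mills_upper {x : ℝ} (hx : 0 < x) :
    (x ^ 3 + 3 * x) * millsRatio x < x ^ 2 + 2 := by
  have cube_pos : ∀ y : ℝ, 0 < y → (0:ℝ) < y ^ 3 + 3 * y := by intro y hy; positivity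
  set k : ℝ → ℝ := fun y => (y ^ 2 + 2) * stdNormalPDF y / (y ^ 3 + 3 * y) - stdNormalSurv y
    with hk
  have key : 0 < k x := by
    apply pos_of_deriv_neg_tendsto
      (f' := fun y => -6 * stdNormalPDF y / (y ^ 3 + 3 * y) ^ 2)
    · intro y hy
      have hy0 : 0 < y := lt_of_lt_of_le hx hy
      have hden := (cube_pos y hy0).ne'
      have d1 : HasDerivAt (fun y : ℝ => (y ^ 2 + 2) * stdNormalPDF y)
          ((2 * y ^ 1) * stdNormalPDF y + (y ^ 2 + 2) * (-y * stdNormalPDF y)) y :=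
        ((hasDerivAt_pow 2 y).add_const 2).mul (pdf_hasDerivAt y)
      have d2 : HasDerivAt (fun y : ℝ => y ^ 3 + 3 * y) (3 * y ^ 2 + 3 * 1) y :=
        (hasDerivAt_pow 3 y).add ((hasDerivAt_id y).const_mul 3)
      have d3 := d1.div d2 hden
      have d4 := d3.sub (surv_hasDerivAt y)
      convert d4 using 1 <;> try rfl
      field_simp
      ring
    · intro y hy
      have hy0 : 0 < y := lt_of_lt_of_le hx hy
      have : (0:ℝ) < (y ^ 3 + 3 * y) ^ 2 := by positivity
      have h2 : -6 * stdNormalPDF y < 0 := by linarith [pdf_pos y]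
      exact div_neg_of_neg_of_pos h2 this
    · have h1 : Tendsto (fun y : ℝ => (y ^ 2 + 2) * stdNormalPDF y / (y ^ 3 + 3 * y)) atTop
          (nhds 0) := by
        have h3 : Tendsto (fun y : ℝ => 3 * stdNormalPDF y) atTop (nhds 0) := by
          simpa using pdf_tendsto.const_mul 3
        apply tendsto_of_tendsto_of_tendsto_of_le_of_le' tendsto_const_nhds h3
        · filter_upwards [eventually_ge_atTop (1:ℝ)] with y hy
          have h0 : (0:ℝ) < y := by linarith
          have := (pdf_pos y).le
          positivity
        · filter_upwards [eventually_ge_atTop (1:ℝ)] with y hy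
          have hy0 : (0:ℝ) < y := by linarith
          rw [div_le_iff₀ (cube_pos y hy0)]
          have hpoly : y ^ 2 + 2 ≤ 3 * (y ^ 3 + 3 * y) := by nlinarith [sq_nonneg (y - 1)]
          nlinarith [mul_le_mul_of_nonneg_right hpoly (pdf_pos y).le]
      have := h1.sub surv_tendsto
      simpa using this
  rw [hk] at key
  simp only [sub_pos] at key
  rw [lt_div_iff₀ (cube_pos x hx)] at key
  have hrw : (x ^ 3 + 3 * x) * millsRatio x
      = (x ^ 3 + 3 * x) * stdNormalSurv x / stdNormalPDF x := by
    rw [mills_eq]; ring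
  rw [hrw, div_lt_iff₀ (pdf_pos x)]
  nlinarith [key]

lemma mills_deriv2 (x : ℝ) :
    HasDerivAt (deriv millsRatio) (millsRatio x + x * (x * millsRatio x - 1)) x := by
  rw [deriv_mills]
  have h := ((hasDerivAt_id x).mul (mills_hasDerivAt x)).sub_const 1
  convert h using 1 <;> try rfl
  simp only [id_eq]
  ring

theorem part1 : StrictConvexOn ℝ (Set.Ioi 0) millsRatio := by
  apply strictConvexOn_of_deriv2_pos (convex_Ioi 0) mills_continuous.continuousOn
  intro x hx
  rw [interior_Ioi] at hx
  simp only [Function.iterate_succ, Function.iterate_zero, Function.comp_apply, id_eq]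
  rw [(mills_deriv2 x).deriv]
  have h := mills_lower hx
  rw [div_lt_iff₀ (by positivity : (0:ℝ) < x ^ 2 + 1)] at h
  nlinarith [h]

theorem part3 : StrictAntiOn (fun x : ℝ => x ^ 2 * deriv millsRatio x) (Set.Ioi 0) := by
  have hfe : (fun x : ℝ => x ^ 2 * deriv millsRatio x)
      = fun x : ℝ => x ^ 2 * (x * millsRatio x - 1) := by rw [deriv_mills]
  rw [hfe]
  apply strictAntiOn_of_deriv_neg (convex_Ioi 0)
  · exact ((continuous_pow 2).mul
      ((continuous_id.mul mills_continuous).sub continuous_const)).continuousOn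
  · intro x hx
    rw [interior_Ioi] at hx
    have hd : HasDerivAt (fun x : ℝ => x ^ 2 * (x * millsRatio x - 1))
        (2 * x ^ 1 * (x * millsRatio x - 1)
          + x ^ 2 * (1 * millsRatio x + x * (x * millsRatio x - 1))) x :=
      (hasDerivAt_pow 2 x).mul (((hasDerivAt_id x).mul (mills_hasDerivAt x)).sub_const 1)
    rw [hd.deriv]
    have h := mills_upper hx
    have hx0 : (0:ℝ) < x := hx
    nlinarith [mul_pos hx0 (sub_pos.mpr h)]

theorem part2 : StrictConcaveOn ℝ (Set.Ioi 0) (fun x : ℝ => millsRatio (1 / x)) := by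
  have hinv : ∀ y : ℝ, y ≠ 0 → HasDerivAt (fun y : ℝ => 1 / y) (-(1 / y ^ 2)) y := by
    intro y hy
    simpa [one_div] using hasDerivAt_inv hy
  have hg : ∀ y : ℝ, y ≠ 0 → HasDerivAt (fun y : ℝ => millsRatio (1 / y))
      ((1 / y * millsRatio (1 / y) - 1) * -(1 / y ^ 2)) y := by
    intro y hy
    exact (mills_hasDerivAt (1 / y)).comp y (hinv y hy)
  apply strictConcaveOn_of_deriv2_neg (convex_Ioi 0)
  · exact mills_continuous.comp_continuousOn
      (continuousOn_const.div continuousOn_id fun x hx => ne_of_gt hx)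
  intro x hx
  rw [interior_Ioi] at hx
  have hx0 : (0:ℝ) < x := hx
  have hx' : x ≠ 0 := ne_of_gt hx0
  simp only [Function.iterate_succ, Function.iterate_zero, Function.comp_apply, id_eq]
  set G : ℝ → ℝ := fun y => (1 / y * millsRatio (1 / y) - 1) * -(1 / y ^ 2) with hG
  have hev : deriv (fun x : ℝ => millsRatio (1 / x)) =ᶠ[nhds x] G := by
    filter_upwards [isOpen_Ioi.mem_nhds hx] with y hy
    exact (hg y (ne_of_gt hy)).deriv
  rw [hev.deriv_eq]
  -- derivative of G at x
  have hA : HasDerivAt (fun y : ℝ => 1 / y * millsRatio (1 / y) - 1)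
      (-(1 / x ^ 2) * millsRatio (1 / x)
        + 1 / x * ((1 / x * millsRatio (1 / x) - 1) * -(1 / x ^ 2))) x :=
    ((hinv x (ne_of_gt hx)).mul (hg x (ne_of_gt hx))).sub_const 1
  have hB : HasDerivAt (fun y : ℝ => -(1 / y ^ 2)) (2 / x ^ 3) x := by
    have h1 : HasDerivAt (fun y : ℝ => y ^ 2) (2 * x ^ 1) x := hasDerivAt_pow 2 x
    have h2 := (h1.inv (pow_pos hx0 2).ne').neg
    convert h2 using 1 <;> try rfl
    · funext y; rw [one_div]; rfl
    · field_simp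
  have hGd := hA.mul hB
  have hGd' : HasDerivAt G
      ((millsRatio (1 / x) * (3 * x + 1 / x) - (1 + 2 * x ^ 2)) / x ^ 5) x := by
    rw [hG]
    convert hGd using 1 <;> try rfl
    field_simp
    ring
  rw [hGd'.deriv]
  apply div_neg_of_neg_of_pos _ (pow_pos hx0 5)
  rw [sub_neg]
  have hux : (0:ℝ) < 1 / x := one_div_pos.mpr hx0
  have key := mills_upper hux
  have key2 := mul_lt_mul_of_pos_right key (pow_pos hx0 2)
  have e1 : ((1 / x) ^ 3 + 3 * (1 / x)) * millsRatio (1 / x) * x ^ 2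
      = millsRatio (1 / x) * (3 * x + 1 / x) := by
    field_simp; ring
  have e2 : ((1 / x) ^ 2 + 2) * x ^ 2 = 1 + 2 * x ^ 2 := by
    field_simp
  rw [e1, e2] at key2
  exact key2

/-- The Mills ratio `m` of the standard normal distribution is strictly reciprocally concave
on `(0,∞)`: `m` is strictly convex on `(0,∞)` and `x ↦ m(1/x)` is strictly concave on
`(0,∞)` (equivalently, `x ↦ x² m′(x)` is strictly decreasing on `(0,∞)`). -/
theorem millsRatio_strictly_reciprocally_concave :
    StrictConvexOn ℝ (Set.Ioi 0) millsRatio ∧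
      StrictConcaveOn ℝ (Set.Ioi 0) (fun x : ℝ => millsRatio (1 / x)) ∧
      StrictAntiOn (fun x : ℝ => x ^ 2 * deriv millsRatio x) (Set.Ioi 0) := by
  exact ⟨part1, part2, part3⟩
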